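/- arXiv:1905.02087 — 2 statements merged into one kernel-verified Lean document; each statement's English description precedes it below -/
import Mathlib

section
/- Let 0 < a < 1, τ, γ, ε > 0 with 1/γ > (1 − a)²/4, 0 < c < 1/√τ, β = 1/(1 − τc²), δ = ε/c, and f(v) = v(v − a)(1 − v). Suppose the parameters satisfy β(1 − a)²/4 < ε/c² < β/γ. Then every solution q = (v, u, w) of the system v' = u, u' = β(cu − f(v) + w), w' = δ(v − γw) that is defined and bounded on all of ℝ is the constant zero solution. -/
set_option maxHeartbeats 1000000


/- STATEMENT 16: If β(1−a)²/4 < ε/c² < β/γ, then the only solution of the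
   traveling-wave system defined and bounded on all of ℝ is the trivial
   zero solution. -/
theorem only_trivial_bounded_solution
    (a τ γ ε c β δ : ℝ) (ha0 : 0 < a) (ha1 : a < 1)
    (hτ : 0 < τ) (hγ : 0 < γ) (hε : 0 < ε) (hγN : 1 / γ > (1 - a) ^ 2 / 4)
    (hc0 : 0 < c) (hc1 : c < 1 / Real.sqrt τ)
    (hβ : β = 1 / (1 - τ * c ^ 2)) (hδ : δ = ε / c)
    (hΦ1 : β * (1 - a) ^ 2 / 4 < ε / c ^ 2) (hΦ2 : ε / c ^ 2 < β / γ)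
    (v u w : ℝ → ℝ)
    (hsol : ∀ ξ : ℝ,
      HasDerivAt v (u ξ) ξ ∧
      HasDerivAt u (β * (c * u ξ - v ξ * (v ξ - a) * (1 - v ξ) + w ξ)) ξ ∧
      HasDerivAt w (δ * (v ξ - γ * w ξ)) ξ)
    (hbdd : ∃ M : ℝ, ∀ ξ : ℝ, |v ξ| ≤ M ∧ |u ξ| ≤ M ∧ |w ξ| ≤ M) :
    ∀ ξ : ℝ, v ξ = 0 ∧ u ξ = 0 ∧ w ξ = 0 := by
  obtain ⟨M, hM⟩ := hbdd
  have hM0 : 0 ≤ M := (abs_nonneg _).trans (hM 0).1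
  -- basic positivity
  have hst : 0 < Real.sqrt τ := Real.sqrt_pos.mpr hτ
  have hcs : c * Real.sqrt τ < 1 := (lt_div_iff₀ hst).mp hc1
  have hsq : Real.sqrt τ ^ 2 = τ := Real.sq_sqrt hτ.le
  have hβden : 0 < 1 - τ * c ^ 2 := by nlinarith [mul_pos hc0 hst]
  have hβ0 : 0 < β := by rw [hβ]; positivity
  have hδ0 : 0 < δ := by rw [hδ]; exact div_pos hε hc0
  have hc2 : (0:ℝ) < c ^ 2 := by positivity
  have ha1' : 0 < 1 - a := by linarith
  set N : ℝ := (1 - a) ^ 2 / 4 with hNdef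
  clear_value N
  have hN : 0 < N := by rw [hNdef]; positivity
  have hεδ : ε = δ * c := by rw [hδ]; field_simp
  -- key parameter inequalities
  have hA : β * c * N < δ := by
    have h1 : β * (1 - a) ^ 2 / 4 * c ^ 2 < ε := (lt_div_iff₀ hc2).mp hΦ1
    rw [hεδ] at h1
    rw [hNdef]
    nlinarith
  have hB : δ * γ < β * c := by
    have h1 : ε * γ < β * c ^ 2 := (div_lt_div_iff₀ hc2 hγ).mp hΦ2
    rw [hεδ] at h1
    nlinarith
  set p : ℝ := β * c + δ / N with hpdef
  clear_value p
  have hp0 : 0 < p := by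
    rw [hpdef]
    have h1 : 0 < β * c := mul_pos hβ0 hc0
    have h2 : 0 < δ / N := div_pos hδ0 hN
    linarith only [h1, h2]
  have hp1 : 2 * β * c < p := by
    have h1 : β * c < δ / N := (lt_div_iff₀ hN).mpr hA
    rw [hpdef]; linarith
  have hp2 : p * N < 2 * δ := by
    have hpN : p * N = β * c * N + δ := by
      rw [hpdef]; field_simp
    linarith
  have hp3 : 2 * δ * γ < p := by linarith
  set t : ℝ := -(β * (p - 2 * δ * γ)) / (2 * δ) with htdef
  clear_value t
  have ht0 : t < 0 := by
    rw [htdef]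
    apply div_neg_of_neg_of_pos
    · have : 0 < β * (p - 2 * δ * γ) := mul_pos hβ0 (by linarith only [hp3])
      linarith only [this]
    · linarith only [hδ0]
  set κ : ℝ := min (p - 2 * β * c) (min (β * (2 * δ - p * N)) (β * γ * (p - 2 * δ * γ))) with hκdef
  clear_value κ
  have hκ0 : 0 < κ := by
    rw [hκdef]
    refine lt_min (by linarith only [hp1]) (lt_min ?_ ?_)
    · exact mul_pos hβ0 (by linarith only [hp2])
    · exact mul_pos (mul_pos hβ0 hγ) (by linarith only [hp3])
  have hκ1 : κ ≤ p - 2 * β * c := by rw [hκdef]; exact min_le_left _ _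
  have hκ2 : κ ≤ β * (2 * δ - p * N) := by
    rw [hκdef]; exact le_trans (min_le_right _ _) (min_le_left _ _)
  have hκ3 : κ ≤ β * γ * (p - 2 * δ * γ) := by
    rw [hκdef]; exact le_trans (min_le_right _ _) (min_le_right _ _)
  -- the Lyapunov function and the squared norm
  set G : ℝ → ℝ := fun s => p * (u s * v s) - (u s) ^ 2
      + 2 * β * ((v s) ^ 4 / 4 - (1 + a) * (v s) ^ 3 / 3 + a * (v s) ^ 2 / 2)
      + 2 * β * (v s * w s) - p * β * c / 2 * (v s) ^ 2 + t * (w s) ^ 2 with hGdef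
  clear_value G
  set Q : ℝ → ℝ := fun s => (v s) ^ 2 + (u s) ^ 2 + (w s) ^ 2 with hQdef
  clear_value Q
  set D : ℝ → ℝ := fun s => (p - 2 * β * c) * (u s) ^ 2
      + (2 * β * δ - p * β * ((v s - a) * (1 - v s))) * (v s) ^ 2
      + β * γ * (p - 2 * δ * γ) * (w s) ^ 2 with hDdef
  clear_value D
  -- derivative of G along solutions
  have hG' : ∀ s : ℝ, HasDerivAt G (D s) s := by
    intro s
    obtain ⟨hv, hu, hw⟩ := hsol s
    have A1 := hu.mul hv
    have A2 := hu.pow 2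
    have A3 := (((hv.pow 4).div_const 4).sub (((hv.pow 3).const_mul (1 + a)).div_const 3)).add
        (((hv.pow 2).const_mul a).div_const 2)
    have A4 := hv.mul hw
    have A5 := hv.pow 2
    have A6 := hw.pow 2
    have H := (((((A1.const_mul p).sub A2).add (A3.const_mul (2 * β))).add
        (A4.const_mul (2 * β))).sub (A5.const_mul (p * β * c / 2))).add (A6.const_mul t)
    have ht2 : t * (2 * δ) = -(β * (p - 2 * δ * γ)) := by
      rw [htdef]; field_simp
    simp only [hGdef, hDdef]
    refine H.congr_deriv ?_
    push_cast
    linear_combination (-(γ * (w s) ^ 2 - v s * w s)) * ht2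
  -- the derivative dominates κ Q
  have hDQ : ∀ s : ℝ, κ * Q s ≤ D s := by
    intro s
    simp only [hQdef, hDdef]
    have hsq1 : 0 ≤ p * β * ((v s) ^ 2 * (v s - (1 + a) / 2) ^ 2) :=
      mul_nonneg (mul_nonneg hp0.le hβ0.le) (mul_nonneg (sq_nonneg _) (sq_nonneg _))
    have hNg : (2 * β * δ - p * β * ((v s - a) * (1 - v s))) * (v s) ^ 2
        = (β * (2 * δ - p * N)) * (v s) ^ 2 + p * β * ((v s) ^ 2 * (v s - (1 + a) / 2) ^ 2) := by
      rw [hNdef]; ring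
    have e1 : κ * (u s) ^ 2 ≤ (p - 2 * β * c) * (u s) ^ 2 :=
      mul_le_mul_of_nonneg_right hκ1 (sq_nonneg _)
    have e2 : κ * (v s) ^ 2 ≤ (β * (2 * δ - p * N)) * (v s) ^ 2 :=
      mul_le_mul_of_nonneg_right hκ2 (sq_nonneg _)
    have e3 : κ * (w s) ^ 2 ≤ (β * γ * (p - 2 * δ * γ)) * (w s) ^ 2 :=
      mul_le_mul_of_nonneg_right hκ3 (sq_nonneg _)
    linarith only [hsq1, e1, e2, e3, hNg.ge, hNg.le]
  -- G is controlled by Q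
  set C : ℝ := p / 2 + 1 + β * M ^ 2 / 2 + β * (1 + a) * M + β * a + β + p * β * c / 2 - t
    with hCdef
  clear_value C
  have h1a : (0:ℝ) ≤ 1 + a := by linarith only [ha0]
  have hK : (0:ℝ) ≤ β * M ^ 2 / 2 := div_nonneg (mul_nonneg hβ0.le (sq_nonneg M)) (by norm_num)
  have hK2 : (0:ℝ) ≤ β * (1 + a) * M := mul_nonneg (mul_nonneg hβ0.le h1a) hM0
  have hK3 : (0:ℝ) ≤ β * a := mul_nonneg hβ0.le ha0.le
  have hK4 : (0:ℝ) ≤ p * β * c / 2 :=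
    div_nonneg (mul_nonneg (mul_nonneg hp0.le hβ0.le) hc0.le) (by norm_num)
  have hC0 : 0 < C := by
    rw [hCdef]
    linarith only [hK, hK2, hK3, hK4, hp0, ht0, hβ0]
  have hQ0 : ∀ s : ℝ, 0 ≤ Q s := by intro s; rw [hQdef]; positivity
  have hGQ : ∀ s : ℝ, G s ≤ C * Q s ∧ -(C * Q s) ≤ G s := by
    intro s
    obtain ⟨hvM, huM, hwM⟩ := hM s
    have hv1 := abs_le.mp hvM
    have hv2 : (v s) ^ 2 ≤ M ^ 2 := sq_le_sq' hv1.1 hv1.2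
    have hv4 : (v s) ^ 4 ≤ M ^ 2 * (v s) ^ 2 := by
      calc (v s) ^ 4 = (v s) ^ 2 * (v s) ^ 2 := by ring
        _ ≤ M ^ 2 * (v s) ^ 2 := mul_le_mul_of_nonneg_right hv2 (sq_nonneg _)
    have hv3a : (v s) ^ 3 ≤ M * (v s) ^ 2 := by
      calc (v s) ^ 3 = v s * (v s) ^ 2 := by ring
        _ ≤ M * (v s) ^ 2 := mul_le_mul_of_nonneg_right hv1.2 (sq_nonneg _)
    have hv3b : -M * (v s) ^ 2 ≤ (v s) ^ 3 := by
      calc -M * (v s) ^ 2 ≤ v s * (v s) ^ 2 :=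
            mul_le_mul_of_nonneg_right (by linarith only [hv1.1]) (sq_nonneg _)
        _ = (v s) ^ 3 := by ring
    have m1 : p * (u s * v s) ≤ p / 2 * (u s) ^ 2 + p / 2 * (v s) ^ 2 := by
      nlinarith only [sq_nonneg (u s - v s), hp0, mul_nonneg hp0.le (sq_nonneg (u s - v s))]
    have m1' : -(p / 2 * (u s) ^ 2 + p / 2 * (v s) ^ 2) ≤ p * (u s * v s) := by
      nlinarith only [sq_nonneg (u s + v s), hp0, mul_nonneg hp0.le (sq_nonneg (u s + v s))]
    have m2 : 2 * β * (v s * w s) ≤ β * (v s) ^ 2 + β * (w s) ^ 2 := by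
      nlinarith only [sq_nonneg (v s - w s), hβ0, mul_nonneg hβ0.le (sq_nonneg (v s - w s))]
    have m2' : -(β * (v s) ^ 2 + β * (w s) ^ 2) ≤ 2 * β * (v s * w s) := by
      nlinarith only [sq_nonneg (v s + w s), hβ0, mul_nonneg hβ0.le (sq_nonneg (v s + w s))]
    have m3 : β * (v s) ^ 4 ≤ β * (M ^ 2 * (v s) ^ 2) :=
      mul_le_mul_of_nonneg_left hv4 hβ0.le
    have hq : (0:ℝ) ≤ 2 * β * (1 + a) / 3 :=
      div_nonneg (mul_nonneg (mul_nonneg (by norm_num) hβ0.le) h1a) (by norm_num)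
    have m4a := mul_le_mul_of_nonneg_left hv3a hq
    have m4b := mul_le_mul_of_nonneg_left hv3b hq
    have hmon : (0:ℝ) ≤ β * (1 + a) * M * (v s) ^ 2 := mul_nonneg hK2 (sq_nonneg _)
    have m5 : (0:ℝ) ≤ p * β * c / 2 * (v s) ^ 2 := mul_nonneg hK4 (sq_nonneg _)
    have m6 : t * (w s) ^ 2 ≤ 0 := mul_nonpos_of_nonpos_of_nonneg ht0.le (sq_nonneg _)
    have m7 : (0:ℝ) ≤ β * a * (v s) ^ 2 := mul_nonneg hK3 (sq_nonneg _)
    have m8 : (0:ℝ) ≤ β * (v s) ^ 4 := mul_nonneg hβ0.le (by positivity)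
    have g1 : (0:ℝ) ≤ β * M ^ 2 / 2 * (v s) ^ 2 := mul_nonneg hK (sq_nonneg _)
    -- coefficient comparisons
    have hCu : p / 2 + 1 ≤ C := by
      rw [hCdef]; linarith only [hK, hK2, hK3, hK4, ht0, hβ0]
    have hCv : p / 2 + β * M ^ 2 / 2 + β * (1 + a) * M + β * a + β + p * β * c / 2 ≤ C := by
      rw [hCdef]; linarith only [ht0]
    have hCw : β - t ≤ C := by
      rw [hCdef]; linarith only [hK, hK2, hK3, hK4, hp0]
    have gu : 0 ≤ (C - (p / 2 + 1)) * (u s) ^ 2 :=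
      mul_nonneg (by linarith only [hCu]) (sq_nonneg _)
    have gv : 0 ≤ (C - (p / 2 + β * M ^ 2 / 2 + β * (1 + a) * M + β * a + β + p * β * c / 2))
        * (v s) ^ 2 := mul_nonneg (by linarith only [hCv]) (sq_nonneg _)
    have gw : 0 ≤ (C - (β - t)) * (w s) ^ 2 :=
      mul_nonneg (by linarith only [hCw]) (sq_nonneg _)
    have hu2 : (0:ℝ) ≤ (u s) ^ 2 := sq_nonneg _
    have hw2 : (0:ℝ) ≤ (w s) ^ 2 := sq_nonneg _
    have htw : (0:ℝ) ≤ -t * (w s) ^ 2 :=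
      mul_nonneg (by linarith only [ht0]) (sq_nonneg _)
    simp only [hGdef, hQdef]
    constructor
    · linarith only [m1, m2, m3, m4b, m6, m5, m7, hmon, gu, gv, gw, hu2, hw2, htw, g1]
    · linarith only [m1', m2', m4a, m6, m5, m7, m8, hmon, gu, gv, gw, hu2, hw2, htw, g1]
  -- uniform bound on G
  set B : ℝ := C * (3 * M ^ 2) with hBdef
  clear_value B
  have hB0 : 0 ≤ B := by
    rw [hBdef]
    exact mul_nonneg hC0.le (by positivity)
  have hGB : ∀ s : ℝ, -B ≤ G s ∧ G s ≤ B := by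
    intro s
    obtain ⟨hvM, huM, hwM⟩ := hM s
    have hv1 := abs_le.mp hvM
    have hu1 := abs_le.mp huM
    have hw1 := abs_le.mp hwM
    have hQB : Q s ≤ 3 * M ^ 2 := by
      simp only [hQdef]
      have e1 : (v s) ^ 2 ≤ M ^ 2 := sq_le_sq' hv1.1 hv1.2
      have e2 : (u s) ^ 2 ≤ M ^ 2 := sq_le_sq' hu1.1 hu1.2
      have e3 : (w s) ^ 2 ≤ M ^ 2 := sq_le_sq' hw1.1 hw1.2
      linarith only [e1, e2, e3]
    have h1 := (hGQ s).1
    have h2 := (hGQ s).2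
    have h3 : C * Q s ≤ B := by
      rw [hBdef]; exact mul_le_mul_of_nonneg_left hQB hC0.le
    exact ⟨by linarith, by linarith⟩
  set lam : ℝ := κ / C with hlamdef
  clear_value lam
  have hlam0 : 0 < lam := by rw [hlamdef]; exact div_pos hκ0 hC0
  have hlamC : lam * C = κ := by rw [hlamdef]; exact div_mul_cancel₀ κ hC0.ne'
  -- Gronwall-type monotonicity
  have hmono1 : Monotone (fun s : ℝ => Real.exp (-lam * s) * G s) := by
    have hd : ∀ s : ℝ, HasDerivAt (fun s : ℝ => Real.exp (-lam * s) * G s)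
        (Real.exp (-lam * s) * (D s - lam * G s)) s := by
      intro s
      have he : HasDerivAt (fun s : ℝ => Real.exp (-lam * s)) (Real.exp (-lam * s) * (-lam)) s := by
        have := ((hasDerivAt_id s).const_mul (-lam)).exp
        simpa using this
      have := he.mul (hG' s)
      refine this.congr_deriv ?_
      ring
    apply monotone_of_deriv_nonneg
    · exact fun s => (hd s).differentiableAt
    · intro s
      rw [(hd s).deriv]
      have h1 : lam * G s ≤ κ * Q s := by
        calc lam * G s ≤ lam * (C * Q s) := by
              exact mul_le_mul_of_nonneg_left (hGQ s).1 hlam0.le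
          _ = κ * Q s := by rw [← mul_assoc, hlamC]
      have h2 := hDQ s
      have h3 : 0 ≤ D s - lam * G s := by linarith only [h1, h2]
      exact mul_nonneg (Real.exp_pos _).le h3
  have hmono2 : Monotone (fun s : ℝ => Real.exp (lam * s) * G s) := by
    have hd : ∀ s : ℝ, HasDerivAt (fun s : ℝ => Real.exp (lam * s) * G s)
        (Real.exp (lam * s) * (D s + lam * G s)) s := by
      intro s
      have he : HasDerivAt (fun s : ℝ => Real.exp (lam * s)) (Real.exp (lam * s) * lam) s := by
        have := ((hasDerivAt_id s).const_mul lam).exp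
        simpa using this
      have := he.mul (hG' s)
      refine this.congr_deriv ?_
      ring
    apply monotone_of_deriv_nonneg
    · exact fun s => (hd s).differentiableAt
    · intro s
      rw [(hd s).deriv]
      have h1 : -(lam * G s) ≤ κ * Q s := by
        have := mul_le_mul_of_nonneg_left (hGQ s).2 hlam0.le
        calc -(lam * G s) = lam * (-(G s)) := by ring
          _ ≤ lam * (C * Q s) := mul_le_mul_of_nonneg_left (by linarith [(hGQ s).2]) hlam0.le
          _ = κ * Q s := by rw [← mul_assoc, hlamC]
      have h2 := hDQ s
      have h3 : 0 ≤ D s + lam * G s := by linarith only [h1, h2]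
      exact mul_nonneg (Real.exp_pos _).le h3
  -- G vanishes identically
  have hG0 : ∀ s : ℝ, G s = 0 := by
    intro s
    by_contra hne
    rcases lt_or_gt_of_ne hne with hneg | hpos
    · -- G s < 0 : go left using hmono2
      set T : ℝ := (B / (-G s)) / lam with hTdef
      have hT0 : 0 ≤ T := by
        rw [hTdef]
        exact div_nonneg (div_nonneg hB0 (by linarith only [hneg])) hlam0.le
      have hlamT : lam * T = B / (-G s) := by
        rw [hTdef]
        rw [mul_comm, div_mul_cancel₀ _ hlam0.ne']
      have hkey : Real.exp (lam * (s - T)) * G (s - T) ≤ Real.exp (lam * s) * G s :=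
        hmono2 (show s - T ≤ s by linarith)
      have he : Real.exp (lam * s) = Real.exp (lam * (s - T)) * Real.exp (lam * T) := by
        rw [← Real.exp_add]; ring_nf
      have hepos : 0 < Real.exp (lam * (s - T)) := Real.exp_pos _
      have hq : G (s - T) ≤ Real.exp (lam * T) * G s := by
        rw [he] at hkey
        have := (mul_le_mul_iff_right₀ hepos).mp (by linarith only [hkey] : Real.exp (lam * (s - T)) * G (s - T) ≤ Real.exp (lam * (s - T)) * (Real.exp (lam * T) * G s))
        linarith only [this]
      have hexp : lam * T + 1 ≤ Real.exp (lam * T) := Real.add_one_le_exp _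
      have h3 : (B / (-G s)) * G s = -B := by
        rw [div_mul_eq_mul_div, div_eq_iff (show -G s ≠ 0 from (by linarith only [hneg] : (0:ℝ) < -G s).ne')]
        ring
      have h4 : Real.exp (lam * T) * G s ≤ (lam * T + 1) * G s := by
        nlinarith only [hexp, hneg,
          mul_nonneg (by linarith only [hexp] : (0:ℝ) ≤ Real.exp (lam * T) - (lam * T + 1))
            (by linarith only [hneg] : (0:ℝ) ≤ -G s)]
      have h5 : (lam * T + 1) * G s = -B + G s := by
        rw [hlamT]; linear_combination h3
      have h6 := (hGB (s - T)).1
      linarith only [hq, h4, h5, h6, hneg]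
    · -- 0 < G s : go right using hmono1
      set T : ℝ := (B / G s) / lam with hTdef
      have hT0 : 0 ≤ T := by
        rw [hTdef]
        exact div_nonneg (div_nonneg hB0 hpos.le) hlam0.le
      have hlamT : lam * T = B / G s := by
        rw [hTdef]
        rw [mul_comm, div_mul_cancel₀ _ hlam0.ne']
      have hkey : Real.exp (-lam * s) * G s ≤ Real.exp (-lam * (s + T)) * G (s + T) :=
        hmono1 (show s ≤ s + T by linarith)
      have he : Real.exp (-lam * (s + T)) = Real.exp (-lam * s) * Real.exp (-(lam * T)) := by
        rw [← Real.exp_add]; ring_nf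
      have hepos : 0 < Real.exp (-lam * s) := Real.exp_pos _
      have hq : G s ≤ Real.exp (-(lam * T)) * G (s + T) := by
        rw [he] at hkey
        have := (mul_le_mul_iff_right₀ hepos).mp (by linarith only [hkey] : Real.exp (-lam * s) * G s ≤ Real.exp (-lam * s) * (Real.exp (-(lam * T)) * G (s + T)))
        linarith only [this]
      have hq2 : Real.exp (lam * T) * G s ≤ G (s + T) := by
        have hE : Real.exp (lam * T) * Real.exp (-(lam * T)) = 1 := by
          rw [← Real.exp_add]; simp
        have := mul_le_mul_of_nonneg_left hq (Real.exp_pos (lam * T)).le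
        calc Real.exp (lam * T) * G s ≤ Real.exp (lam * T) * (Real.exp (-(lam * T)) * G (s + T)) := this
          _ = G (s + T) := by rw [← mul_assoc, hE, one_mul]
      have hexp : lam * T + 1 ≤ Real.exp (lam * T) := Real.add_one_le_exp _
      have h3 : (B / G s) * G s = B := div_mul_cancel₀ B hpos.ne'
      have h4 : (lam * T + 1) * G s ≤ Real.exp (lam * T) * G s := by
        nlinarith only [hexp, hpos,
          mul_nonneg (by linarith only [hexp] : (0:ℝ) ≤ Real.exp (lam * T) - (lam * T + 1))
            (by linarith only [hpos] : (0:ℝ) ≤ G s)]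
      have h5 : (lam * T + 1) * G s = B + G s := by
        rw [hlamT]; linear_combination h3
      have h6 := (hGB (s + T)).2
      linarith only [hq2, h4, h5, h6, hpos]
  -- conclude
  intro ξ
  have hGfun : G = fun _ => (0:ℝ) := funext hG0
  have hD0 : D ξ = 0 := by
    have h1 := hG' ξ
    rw [hGfun] at h1
    exact ((hasDerivAt_const ξ (0:ℝ)).unique h1).symm
  have hQle : κ * Q ξ ≤ 0 := by rw [← hD0]; exact hDQ ξ
  have hQ0' : Q ξ = 0 := by
    have h1 := hQ0 ξ
    nlinarith only [h1, hQle, hκ0, mul_nonneg hκ0.le h1]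
  have hv0 : (v ξ) ^ 2 = 0 ∧ (u ξ) ^ 2 = 0 ∧ (w ξ) ^ 2 = 0 := by
    simp only [hQdef] at hQ0'
    refine ⟨le_antisymm (by linarith only [hQ0', sq_nonneg (u ξ), sq_nonneg (w ξ)]) (sq_nonneg _),
      le_antisymm (by linarith only [hQ0', sq_nonneg (v ξ), sq_nonneg (w ξ)]) (sq_nonneg _),
      le_antisymm (by linarith only [hQ0', sq_nonneg (v ξ), sq_nonneg (u ξ)]) (sq_nonneg _)⟩
  exact ⟨pow_eq_zero_iff two_ne_zero |>.mp hv0.1,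
    pow_eq_zero_iff two_ne_zero |>.mp hv0.2.1,
    pow_eq_zero_iff two_ne_zero |>.mp hv0.2.2⟩
end

section
/- Let 0 < a < 1, τ, γ, ε > 0, 0 < c < 1/√τ, β = 1/(1 − τc²), δ = ε/c, and f(v) = v(v − a)(1 − v). Define G(v, u, w) = u² + 2β∫₀ᵛ f(z) dz + (cβ)² v² + β²(c²/ε − γ/β) w² − 2βv(w + cu). Then along every solution q = (v, u, w) of the system v' = u, u' = β(cu − f(v) + w), w' = δ(v − γw), one has, for every ξ in the interval of definition, d/dξ G(q(ξ)) = −2βc ((ε/c²) v(ξ)² − β v(ξ) f(v(ξ))) − 2γδβ² (c²/ε − γ/β) w(ξ)². -/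
lemma cubic_integral (a : ℝ) (x : ℝ) :
    (∫ z in (0:ℝ)..x, z * (z - a) * (1 - z))
      = -(x ^ 4 / 4) + (1 + a) * x ^ 3 / 3 - a * x ^ 2 / 2 := by
  have hderiv : ∀ z ∈ Set.uIcc (0:ℝ) x,
      HasDerivAt (fun y : ℝ => -(y ^ 4 / 4) + (1 + a) * y ^ 3 / 3 - a * y ^ 2 / 2)
        (z * (z - a) * (1 - z)) z := by
    intro z _
    have h : HasDerivAt (fun y : ℝ => -(y ^ 4 / 4) + (1 + a) * y ^ 3 / 3 - a * y ^ 2 / 2)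
        (-((4 : ℕ) * z ^ 3 * 1 / 4) + (1 + a) * ((3 : ℕ) * z ^ 2 * 1) / 3
          - a * ((2 : ℕ) * z ^ 1 * 1) / 2) z := by
      exact ((((hasDerivAt_id z).pow 4).div_const 4).neg.add
        ((((hasDerivAt_id z).pow 3).const_mul (1 + a)).div_const 3)).sub
        ((((hasDerivAt_id z).pow 2).const_mul a).div_const 2)
    convert h using 1
    push_cast
    ring
  have hint : IntervalIntegrable (fun z : ℝ => z * (z - a) * (1 - z))
      MeasureTheory.volume 0 x :=
    (Continuous.intervalIntegrable (by continuity) 0 x)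
  rw [intervalIntegral.integral_eq_sub_of_hasDerivAt hderiv hint]
  ring

/- STATEMENT 17: Along every solution of the traveling-wave system, the
   Lyapunov-type function
   G(v,u,w) = u² + 2β∫₀ᵛ f + (cβ)²v² + β²(c²/ε − γ/β)w² − 2βv(w + cu)
   satisfies dG/dξ = −2βc((ε/c²)v² − βvf(v)) − 2γδβ²(c²/ε − γ/β)w². -/
theorem lyapunov_derivative_formula
    (a τ γ ε c β δ : ℝ) (ha0 : 0 < a) (ha1 : a < 1)
    (hτ : 0 < τ) (hγ : 0 < γ) (hε : 0 < ε)
    (hc0 : 0 < c) (hc1 : c < 1 / Real.sqrt τ)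
    (hβ : β = 1 / (1 - τ * c ^ 2)) (hδ : δ = ε / c)
    (s : Set ℝ) (hs : IsOpen s) (v u w : ℝ → ℝ)
    (hsol : ∀ ξ ∈ s,
      HasDerivAt v (u ξ) ξ ∧
      HasDerivAt u (β * (c * u ξ - v ξ * (v ξ - a) * (1 - v ξ) + w ξ)) ξ ∧
      HasDerivAt w (δ * (v ξ - γ * w ξ)) ξ) :
    ∀ ξ ∈ s,
      HasDerivAt
        (fun t : ℝ =>
          u t ^ 2 + 2 * β * (∫ z in (0 : ℝ)..(v t), z * (z - a) * (1 - z))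
            + (c * β) ^ 2 * v t ^ 2
            + β ^ 2 * (c ^ 2 / ε - γ / β) * w t ^ 2
            - 2 * β * v t * (w t + c * u t))
        (-2 * β * c * (ε / c ^ 2 * v ξ ^ 2
            - β * (v ξ * (v ξ * (v ξ - a) * (1 - v ξ))))
          - 2 * γ * δ * β ^ 2 * (c ^ 2 / ε - γ / β) * w ξ ^ 2) ξ := by
  intro ξ hξ
  obtain ⟨hv, hu, hw⟩ := hsol ξ hξ
  -- β ≠ 0
  have hst : 0 < Real.sqrt τ := Real.sqrt_pos.mpr hτ
  have h1 : c * Real.sqrt τ < 1 := (lt_div_iff₀ hst).mp hc1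
  have hτc : τ * c ^ 2 < 1 := by
    have h2 : (c * Real.sqrt τ) ^ 2 < 1 := by nlinarith [mul_pos hc0 hst]
    calc τ * c ^ 2 = (c * Real.sqrt τ) ^ 2 := by
          rw [mul_pow, Real.sq_sqrt hτ.le]; ring
      _ < 1 := h2
  have hβ0 : β ≠ 0 := by
    have hpos : 0 < 1 - τ * c ^ 2 := by linarith
    rw [hβ]
    exact one_div_ne_zero hpos.ne'
  simp only [cubic_integral a]
  have H : HasDerivAt
      (fun t : ℝ =>
        u t ^ 2 + 2 * β * (-(v t ^ 4 / 4) + (1 + a) * v t ^ 3 / 3 - a * v t ^ 2 / 2)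
          + (c * β) ^ 2 * v t ^ 2
          + β ^ 2 * (c ^ 2 / ε - γ / β) * w t ^ 2
          - 2 * β * v t * (w t + c * u t))
      ((2 : ℕ) * u ξ ^ 1 * (β * (c * u ξ - v ξ * (v ξ - a) * (1 - v ξ) + w ξ))
        + 2 * β * (-((4 : ℕ) * v ξ ^ 3 * u ξ / 4)
            + (1 + a) * ((3 : ℕ) * v ξ ^ 2 * u ξ) / 3
            - a * ((2 : ℕ) * v ξ ^ 1 * u ξ) / 2)
        + (c * β) ^ 2 * ((2 : ℕ) * v ξ ^ 1 * u ξ)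
        + β ^ 2 * (c ^ 2 / ε - γ / β) * ((2 : ℕ) * w ξ ^ 1 * (δ * (v ξ - γ * w ξ)))
        - (2 * β * u ξ * (w ξ + c * u ξ)
            + 2 * β * v ξ * (δ * (v ξ - γ * w ξ)
              + c * (β * (c * u ξ - v ξ * (v ξ - a) * (1 - v ξ) + w ξ))))) ξ := by
    exact ((((hu.pow 2).add
      (((((hv.pow 4).div_const 4).neg.add
          (((hv.pow 3).const_mul (1 + a)).div_const 3)).sub
        (((hv.pow 2).const_mul a).div_const 2)).const_mul (2 * β))).add
      ((hv.pow 2).const_mul ((c * β) ^ 2))).add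
      ((hw.pow 2).const_mul (β ^ 2 * (c ^ 2 / ε - γ / β)))).sub
      (((hv.const_mul (2 * β)).mul (hw.add (hu.const_mul c))))
  convert H using 1
  subst hδ
  push_cast
  field_simp
  ring
end
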